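/- For all integers m and k, the relation rel2(m,k) = 0 holds, where rel2(m,k) = −4((m−1)²−1)·d(m−1,k−1) − 4(2(k−1)+m+1)(m−k+1)·d(m,k−1) + k(2k−m−2)·d(m,k). -/

import Mathlib

/-- Binomial coefficient polynomial `x(x-1)...(x-j+1)/j!` at integer `x`; zero for `j < 0`. -/
def binC (x j : ℤ) : ℚ :=
  if j < 0 then 0 else (∏ t ∈ Finset.range j.toNat, ((x : ℚ) - t)) / (j.toNat).factorial


/-- The coefficients `d(m,k)`; zero for `m < 0`. -/
noncomputable def dd (m k : ℤ) : ℚ :=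
  if m < 0 then 0 else
  ∑ i ∈ Finset.Icc 0 m, ∑ j ∈ Finset.Icc k m,
    3 * (-1 : ℚ) ^ (k + j) * binC (2 * k) k * binC j i * binC m i * binC i (m - j) /
      (2 * (2 * i - 1) * (2 * j + 1) * (2 * m - 2 * i - 1))

noncomputable def rel2 (m k : ℤ) : ℚ :=
  -4 * ((m - 1) ^ 2 - 1) * dd (m - 1) (k - 1) -
    4 * (2 * (k - 1) + m + 1) * (m - k + 1) * dd m (k - 1) +
    k * (2 * k - m - 2) * dd m k
lemma binC_neg (x j : ℤ) (h : j < 0) : binC x j = 0 := by simp [binC, h]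

lemma binC_of_nonneg (x j : ℤ) (h : 0 ≤ j) :
    binC x j = (∏ t ∈ Finset.range j.toNat, ((x : ℚ) - t)) / (j.toNat).factorial := by
  simp [binC, not_lt.mpr h]

lemma binC_zero (x : ℤ) : binC x 0 = 1 := by simp [binC]

lemma binC_one (x : ℤ) : binC x 1 = x := by
  rw [binC_of_nonneg _ _ one_pos.le]; norm_num

lemma cast_toNat (j : ℤ) (h : 0 ≤ j) : ((j.toNat : ℚ)) = (j : ℚ) := by
  exact_mod_cast congrArg (fun z : ℤ => (z : ℚ)) (Int.toNat_of_nonneg h)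

lemma binC_self_zero (x j : ℤ) (h0 : 0 ≤ x) (h : x < j) : binC x j = 0 := by
  rw [binC_of_nonneg _ _ (by omega)]
  rw [Finset.prod_eq_zero (i := x.toNat) (by simp; omega)]
  · simp
  · rw [cast_toNat _ h0]; ring

lemma prod_shift (x : ℚ) (s : ℕ) :
    ∏ t ∈ Finset.range (s+1), (x - t) = (∏ t ∈ Finset.range s, (x - 1 - t)) * x := by
  rw [Finset.prod_range_succ']
  have : ∀ t ∈ Finset.range s, (x - ((t:ℕ) + 1 : ℕ)) = (x - 1 - t) := by
    intro t _; push_cast; ring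
  rw [Finset.prod_congr rfl this]
  simp

lemma binC_absorb (x j : ℤ) : ((x:ℚ) - j) * binC x j = ((j:ℚ) + 1) * binC x (j+1) := by
  rcases lt_or_ge j 0 with h | h
  · rcases lt_or_ge (j+1) 0 with h' | h'
    · rw [binC_neg _ _ h, binC_neg _ _ h']; ring
    · have hj : j = -1 := by omega
      subst hj
      rw [binC_neg _ _ h]; push_cast; ring
  · rw [binC_of_nonneg _ _ h, binC_of_nonneg _ _ (by omega)]
    have h1 : (j+1).toNat = j.toNat + 1 := by omega
    rw [h1, Finset.prod_range_succ, Nat.factorial_succ]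
    rw [cast_toNat _ h]
    have hf : ((j.toNat).factorial : ℚ) ≠ 0 := by exact_mod_cast (j.toNat).factorial_ne_zero
    push_cast
    rw [cast_toNat _ h]
    field_simp

lemma binC_mul_left (x j : ℤ) : (j:ℚ) * binC x j = (x:ℚ) * binC (x-1) (j-1) := by
  rcases lt_or_ge j 0 with h | h
  · rw [binC_neg x j h, binC_neg _ _ (by omega : j - 1 < 0)]; ring
  · rcases h.eq_or_lt with h0 | h0
    · rw [binC_neg _ _ (by omega : j - 1 < 0), ← h0]; norm_num
    · rw [binC_of_nonneg _ _ h, binC_of_nonneg _ _ (by omega)]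
      obtain ⟨s, hs⟩ : ∃ s : ℕ, j.toNat = s + 1 := ⟨j.toNat - 1, by omega⟩
      have h1 : (j - 1).toNat = s := by omega
      rw [hs, h1, prod_shift, Nat.factorial_succ]
      have hc : ((s : ℚ) + 1) = (j : ℚ) := by
        rw [← cast_toNat j h, hs]; push_cast; ring
      have hf : ((s).factorial : ℚ) ≠ 0 := by exact_mod_cast (s).factorial_ne_zero
      have hx : ((x - 1 : ℤ) : ℚ) = (x : ℚ) - 1 := by push_cast; ring
      rw [hx]
      push_cast
      rw [← hc]
      field_simp

lemma binC_pascal (x j : ℤ) : binC x j = binC (x-1) (j-1) + binC (x-1) j := by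
  rcases lt_or_ge j 0 with h | h
  · rw [binC_neg _ _ h, binC_neg _ _ (by omega : j - 1 < 0), binC_neg _ _ h]; ring
  · rcases h.eq_or_lt with h0 | h0
    · rw [binC_neg _ _ (by omega : j - 1 < 0), ← h0, binC_zero, binC_zero]; ring
    · rw [binC_of_nonneg _ _ h, binC_of_nonneg _ _ (by omega), binC_of_nonneg _ _ h]
      obtain ⟨s, hs⟩ : ∃ s : ℕ, j.toNat = s + 1 := ⟨j.toNat - 1, by omega⟩
      have h1 : (j - 1).toNat = s := by omega
      have hx : ((x - 1 : ℤ) : ℚ) = (x : ℚ) - 1 := by push_cast; ring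
      rw [hs, h1, hx, prod_shift, Nat.factorial_succ, Finset.prod_range_succ]
      have hf : ((s).factorial : ℚ) ≠ 0 := by exact_mod_cast (s).factorial_ne_zero
      have hf2 : (((s+1) * s.factorial : ℕ) : ℚ) ≠ 0 := by
        exact_mod_cast Nat.mul_ne_zero (by omega) (s).factorial_ne_zero
      field_simp
      push_cast
      ring

lemma q_ne (x : ℤ) (h : x ≠ 0) : ((x:ℚ)) ≠ 0 := Int.cast_ne_zero.mpr h

def fz (m j i : ℤ) : ℚ :=
  binC j i * binC m i * binC i (m - j) / ((2*(i:ℚ) - 1) * (2*(m:ℚ) - 2*i - 1))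

def gz (m j i : ℤ) : ℚ :=
  (2*(j:ℚ) + 1) * ((m:ℚ) - j + 1) * binC (j-1) (i-1) * binC m i * binC i (m - j + 1)
    / (2*(m:ℚ) - 2*i - 1)

set_option maxHeartbeats 1000000 in
lemma keyA (m j i : ℤ) (hm : 1 ≤ m) (hj1 : 1 ≤ j) (hjm : j ≤ m) (hi : 0 ≤ i) :
    (2*(m:ℚ)*(m-2)*(2*j+1)) * fz (m-1) (j-1) i
      + (2*(2*(j:ℚ)+m-1)*(m-j+1)*(2*j+1)) * fz m (j-1) i
      + ((2*(2*(j:ℚ)+m+1)*(m-j) - m*(2*m+1))*(2*j-1)) * fz m j i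
    = gz m j (i+1) - gz m j i := by
  rcases lt_or_ge i 1 with hi0' | hi0
  · -- i = 0
    have hie : i = 0 := by omega
    subst hie
    rcases eq_or_lt_of_le hjm with hjem | hjlt
    · -- j = m
      subst hjem
      simp only [fz, gz]
      rw [show j - 1 - (j - 1) = 0 by ring, show j - (j - 1) = (0:ℤ) + 1 by ring,
          show j - j = 0 by ring, show ((0:ℤ) + 1) - 1 = 0 by ring, show (0:ℤ) + 1 = 1 by ring,
          show (0:ℤ) - 1 = -1 by ring]
      rw [binC_zero, binC_zero, binC_zero, binC_one, binC_one, binC_one,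
          binC_neg _ _ (by norm_num : (-1:ℤ) < 0)]
      have hz2 : (2*(j:ℚ) - 3) ≠ 0 := by exact_mod_cast q_ne (2*j-3) (by omega)
      have hz3 : (2*(j:ℚ) - 1) ≠ 0 := by exact_mod_cast q_ne (2*j-1) (by omega)
      push_cast
      rw [show 2*((j:ℚ)-1) - 2*0 - 1 = 2*(j:ℚ) - 3 by ring, show 2*(j:ℚ) - 2*0 - 1 = 2*(j:ℚ)-1 by ring,
          show 2*(j:ℚ) - 2*1 - 1 = 2*(j:ℚ) - 3 by ring]
      simp only [← mul_div_assoc]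
      have z1 : (2*(0:ℚ)-1) ≠ 0 := by norm_num
      rw [div_add_div _ _ (mul_ne_zero z1 hz2) (mul_ne_zero z1 hz3),
          div_add_div _ _ (mul_ne_zero (mul_ne_zero z1 hz2) (mul_ne_zero z1 hz3)) (mul_ne_zero z1 hz3),
          div_sub_div _ _ hz2 hz3,
          div_eq_div_iff (mul_ne_zero (mul_ne_zero (mul_ne_zero z1 hz2) (mul_ne_zero z1 hz3)) (mul_ne_zero z1 hz3)) (mul_ne_zero hz2 hz3)]
      ring
    · -- j < m : everything vanishes
      simp only [fz, gz]
      rw [show m - 1 - (j - 1) = m - j by ring, show m - (j - 1) = m - j + 1 by ring,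
          show (0:ℤ) - 1 = -1 by ring, show (0:ℤ) + 1 = 1 by ring]
      rw [binC_self_zero 0 (m - j) (by omega) (by omega),
          binC_self_zero 0 (m - j + 1) (by omega) (by omega),
          binC_self_zero 1 (m - j + 1) (by omega) (by omega),
          binC_neg (j-1) (-1) (by norm_num)]
      ring
  -- 1 ≤ i : generic case
  have hd1 : (2*(i:ℚ) - 1) ≠ 0 := by exact_mod_cast q_ne (2*i-1) (by omega)
  have hd2 : (2*(m:ℚ) - 2*i - 1) ≠ 0 := by exact_mod_cast q_ne (2*m-2*i-1) (by omega)
  have hd3 : (2*(m:ℚ) - 2*i - 3) ≠ 0 := by exact_mod_cast q_ne (2*m-2*i-3) (by omega)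
  have hmq : ((m:ℚ)) ≠ 0 := by exact_mod_cast q_ne m (by omega)
  have hjq : ((m:ℚ) - j + 1) ≠ 0 := by exact_mod_cast q_ne (m-j+1) (by omega)
  have hi1 : ((i:ℚ) + 1) ≠ 0 := by exact_mod_cast q_ne (i+1) (by omega)
  have hiq : ((i:ℚ)) ≠ 0 := by exact_mod_cast q_ne i (by omega)
  have a1 : m - 1 - (j - 1) = m - j := by ring
  have a2 : m - (j - 1) = m - j + 1 := by ring
  have a3 : i + 1 - 1 = i := by ring
  -- cleared relations
  have E1 : (i:ℚ) * binC (j-1) i = ((j:ℚ) - i) * binC (j-1) (i-1) := by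
    have h := binC_absorb (j-1) (i-1)
    rw [show i - 1 + 1 = i by ring] at h
    push_cast at h
    linear_combination -h
  have E3 : (m:ℚ) * binC (m-1) i = ((m:ℚ) - i) * binC m i := by
    have hp := binC_pascal m i
    have hl := binC_mul_left m i
    linear_combination hl - (m:ℚ) * hp
  have E4 : ((i:ℚ)+1) * binC m (i+1) = ((m:ℚ) - i) * binC m i := by
    have hl := binC_mul_left m (i+1)
    rw [a3] at hl
    push_cast at hl
    linear_combination hl + E3
  have E5 : ((m:ℚ) - j + 1) * binC i (m-j+1) = ((i:ℚ) - m + j) * binC i (m-j) := by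
    have h := binC_absorb i (m-j)
    push_cast at h
    linear_combination -h
  obtain ⟨p, hp2, hp1⟩ : ∃ p : ℚ, binC (j-1) (i-1) = (i:ℚ) * p ∧ binC (j-1) i = ((j:ℚ) - i) * p := by
    refine ⟨binC (j-1) (i-1) / (i:ℚ), by field_simp, ?_⟩
    rw [mul_div_assoc', eq_div_iff hiq]
    linear_combination E1
  obtain ⟨μ, hMm, hM, hM'⟩ : ∃ μ : ℚ, binC (m-1) i = ((m:ℚ)-i)*((i:ℚ)+1)*μ ∧
      binC m i = (m:ℚ)*((i:ℚ)+1)*μ ∧ binC m (i+1) = ((m:ℚ)-i)*(m:ℚ)*μ := by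
    have hmi : (m:ℚ)*((i:ℚ)+1) ≠ 0 := mul_ne_zero hmq hi1
    refine ⟨binC m i / ((m:ℚ)*((i:ℚ)+1)), ?_, by field_simp, ?_⟩
    · rw [mul_div_assoc', eq_div_iff hmi]
      linear_combination ((i:ℚ)+1) * E3
    · rw [mul_div_assoc', eq_div_iff hmi]
      linear_combination (m:ℚ) * E4
  obtain ⟨q, hQ, hQ', hN⟩ : ∃ q : ℚ, binC i (m-j) = ((m:ℚ)-j+1)*q ∧
      binC i (m-j+1) = ((i:ℚ)-m+j)*q ∧ binC (i+1) (m-j+1) = ((i:ℚ)+1)*q := by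
    refine ⟨binC i (m-j) / ((m:ℚ)-j+1), by field_simp, ?_, ?_⟩
    · rw [mul_div_assoc', eq_div_iff hjq]
      linear_combination E5
    · have h := binC_pascal (i+1) (m-j+1)
      rw [show i + 1 - 1 = i by ring, show m - j + 1 - 1 = m - j by ring] at h
      rw [h, mul_div_assoc', eq_div_iff hjq]
      linear_combination E5
  have hJ : binC j i = (j:ℚ) * p := by rw [binC_pascal j i, hp2, hp1]; ring
  have hd3a : (2*((m-1:ℤ):ℚ) - 2*(i:ℚ) - 1) = (2*(m:ℚ) - 2*i - 3) := by push_cast; ring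
  have hd3b : (2*(m:ℚ) - 2*(((i+1):ℤ):ℚ) - 1) = (2*(m:ℚ) - 2*i - 3) := by push_cast; ring
  simp only [fz, gz, a1, a2, a3]
  rw [hJ, hp1, hp2, hMm, hM, hM', hQ, hQ', hN, hd3a, hd3b]
  simp only [← mul_div_assoc]
  rw [div_add_div _ _ (mul_ne_zero hd1 hd3) (mul_ne_zero hd1 hd2),
      div_add_div _ _ (mul_ne_zero (mul_ne_zero hd1 hd3) (mul_ne_zero hd1 hd2)) (mul_ne_zero hd1 hd2),
      div_sub_div _ _ hd3 hd2,
      div_eq_div_iff (mul_ne_zero (mul_ne_zero (mul_ne_zero hd1 hd3) (mul_ne_zero hd1 hd2)) (mul_ne_zero hd1 hd2)) (mul_ne_zero hd3 hd2)]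
  ring

noncomputable def Sz (m j : ℤ) : ℚ := ∑ i ∈ Finset.Icc (0:ℤ) m, fz m j i

lemma tele_aux (θ : ℤ → ℚ) (a : ℤ) : ∀ n : ℕ,
    ∑ x ∈ Finset.Icc a (a - 1 + (n:ℤ)), (θ x - θ (x-1)) = θ (a - 1 + (n:ℤ)) - θ (a-1) := by
  intro n
  induction n with
  | zero =>
    rw [Finset.Icc_eq_empty (by omega)]
    simp
  | succ n ih =>
    have hins : Finset.Icc a (a - 1 + ((n:ℤ)+1)) = insert (a + n) (Finset.Icc a (a - 1 + (n:ℤ))) := by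
      ext x; simp; omega
    push_cast
    rw [hins, Finset.sum_insert (by simp), ih]
    rw [show a + (n:ℤ) - 1 = a - 1 + n by ring, show a - 1 + ((n:ℤ)+1) = a + n by ring]
    ring

lemma tele_Icc (θ : ℤ → ℚ) (a b : ℤ) (h : a ≤ b + 1) :
    ∑ x ∈ Finset.Icc a b, (θ x - θ (x-1)) = θ b - θ (a-1) := by
  have hb : b = a - 1 + ((b + 1 - a).toNat : ℤ) := by omega
  rw [hb]
  exact tele_aux θ a _

def A1q (m j : ℤ) : ℚ := 2*(m:ℚ)*((m:ℚ)-2)*(2*(j:ℚ)+1)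
def A2q (m j : ℤ) : ℚ := 2*(2*(j:ℚ)+(m:ℚ)-1)*((m:ℚ)-(j:ℚ)+1)*(2*(j:ℚ)+1)
def A3q (m j : ℤ) : ℚ := (2*(2*(j:ℚ)+(m:ℚ)+1)*((m:ℚ)-(j:ℚ)) - (m:ℚ)*(2*(m:ℚ)+1))*(2*(j:ℚ)-1)

lemma keyS (m j : ℤ) (hm : 1 ≤ m) (hj1 : 1 ≤ j) (hjm : j ≤ m) :
    A1q m j * Sz (m-1) (j-1) + A2q m j * Sz m (j-1) + A3q m j * Sz m j = 0 := by
  have h1 : Sz (m-1) (j-1) = ∑ i ∈ Finset.Icc (0:ℤ) m, fz (m-1) (j-1) i := by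
    have hins : Finset.Icc (0:ℤ) m = insert m (Finset.Icc 0 (m-1)) := by
      ext x; simp; omega
    rw [Sz, hins, Finset.sum_insert (by simp)]
    have hz : fz (m-1) (j-1) m = 0 := by
      rw [fz, binC_self_zero (m-1) m (by omega) (by omega)]
      ring
    rw [hz, zero_add]
  have step : A1q m j * Sz (m-1) (j-1) + A2q m j * Sz m (j-1) + A3q m j * Sz m j
      = ∑ i ∈ Finset.Icc (0:ℤ) m, (gz m j (i+1) - gz m j i) := by
    rw [h1, Sz, Sz, Finset.mul_sum, Finset.mul_sum, Finset.mul_sum,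
        ← Finset.sum_add_distrib, ← Finset.sum_add_distrib]
    refine Finset.sum_congr rfl fun i hi => ?_
    have hi0 : 0 ≤ i := by simp at hi; omega
    exact keyA m j i hm hj1 hjm hi0
  rw [step]
  have conv : ∀ i ∈ Finset.Icc (0:ℤ) m, gz m j (i+1) - gz m j i
      = (fun x => gz m j (x+1)) i - (fun x => gz m j (x+1)) (i-1) := by
    intro i _
    simp only
    rw [show i - 1 + 1 = i by ring]
  rw [Finset.sum_congr rfl conv, tele_Icc _ 0 m (by omega)]
  have hz1 : gz m j (m+1) = 0 := by
    rw [gz, binC_self_zero m (m+1) (by omega) (by omega)]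
    ring
  have hz2 : gz m j (0 - 1 + 1) = 0 := by
    rw [show (0:ℤ) - 1 + 1 = 0 by ring, gz, binC_neg (j-1) (0-1) (by omega)]
    ring
  rw [hz1, hz2]
  ring

def wq (κ j : ℤ) : ℚ := 3 * (-1:ℚ)^(κ+j) * binC (2*κ) κ / (2*(2*(j:ℚ)+1))

lemma dd_eq (m k : ℤ) (hm : 0 ≤ m) :
    dd m k = ∑ j ∈ Finset.Icc k m, wq k j * Sz m j := by
  rw [dd, if_neg (by omega), Finset.sum_comm]
  refine Finset.sum_congr rfl fun j hj => ?_
  rw [Sz, wq, Finset.mul_sum]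
  refine Finset.sum_congr rfl fun i hi => ?_
  rw [fz, div_mul_div_comm]
  have d1 : (2*(2*(i:ℚ)-1)*(2*(j:ℚ)+1)*(2*(m:ℚ)-2*(i:ℚ)-1)) ≠ 0 := by
    have h1 : (2*(i:ℚ)-1) ≠ 0 := by exact_mod_cast q_ne (2*i-1) (by omega)
    have h2 : (2*(j:ℚ)+1) ≠ 0 := by exact_mod_cast q_ne (2*j+1) (by omega)
    have h3 : (2*(m:ℚ)-2*(i:ℚ)-1) ≠ 0 := by exact_mod_cast q_ne (2*m-2*i-1) (by omega)
    exact mul_ne_zero (mul_ne_zero (mul_ne_zero two_ne_zero h1) h2) h3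
  have d2 : (2*(2*(j:ℚ)+1)) * ((2*(i:ℚ)-1)*(2*(m:ℚ)-2*(i:ℚ)-1)) ≠ 0 := by
    have h1 : (2*(i:ℚ)-1) ≠ 0 := by exact_mod_cast q_ne (2*i-1) (by omega)
    have h2 : (2*(j:ℚ)+1) ≠ 0 := by exact_mod_cast q_ne (2*j+1) (by omega)
    have h3 : (2*(m:ℚ)-2*(i:ℚ)-1) ≠ 0 := by exact_mod_cast q_ne (2*m-2*i-1) (by omega)
    exact mul_ne_zero (mul_ne_zero two_ne_zero h2) (mul_ne_zero h1 h3)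
  rw [div_eq_div_iff d1 d2]
  ring

lemma neg_one_zpow_sub_one (a : ℤ) : (-1:ℚ)^(a-1) = -(-1:ℚ)^a := by
  rw [zpow_sub₀ (by norm_num : (-1:ℚ) ≠ 0), zpow_one, div_neg, div_one]

lemma neg_one_zpow_sub_two (a : ℤ) : (-1:ℚ)^(a-2) = (-1:ℚ)^a := by
  rw [zpow_sub₀ (by norm_num : (-1:ℚ) ≠ 0)]; norm_num

lemma neg_one_zpow_two_mul_sub_one (k : ℤ) : (-1:ℚ)^(2*k-1) = -1 := by
  rw [neg_one_zpow_sub_one, zpow_mul]; norm_num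

lemma Bratio (k : ℤ) (hk : 1 ≤ k) :
    binC (2*k) k = 2*(2*(k:ℚ)-1)*binC (2*(k-1)) (k-1)/(k:ℚ) := by
  have hkq : (k:ℚ) ≠ 0 := by exact_mod_cast q_ne k (by omega)
  rw [eq_div_iff hkq]
  have h1 := binC_mul_left (2*k) k
  have h2 := binC_pascal (2*k-1) (k-1)
  rw [show 2*k-1-1 = 2*(k-1) by ring, show k-1-1 = k-2 by ring] at h2
  have h3 := binC_absorb (2*(k-1)) (k-2)
  rw [show k-2+1 = k-1 by ring] at h3
  push_cast at h1 h2 h3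
  have K : (k:ℚ) * (binC (2*k) k * (k:ℚ)) = (k:ℚ) * (2*(2*(k:ℚ)-1)*binC (2*(k-1)) (k-1)) := by
    linear_combination (k:ℚ)*h1 + 2*(k:ℚ)^2*h2 + 2*(k:ℚ)*h3
  exact mul_left_cancel₀ hkq K

def c1q (m : ℤ) : ℚ := -4*(((m:ℚ)-1)^2-1)
def c2q (m k : ℤ) : ℚ := -4*(2*((k:ℚ)-1)+(m:ℚ)+1)*((m:ℚ)-(k:ℚ)+1)
def c3q (m k : ℤ) : ℚ := (k:ℚ)*(2*(k:ℚ)-(m:ℚ)-2)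
def nuq (k j : ℤ) : ℚ := -3*(-1:ℚ)^(k+j) * binC (2*(k-1)) (k-1) / ((2*(j:ℚ)-1)*(2*(j:ℚ)+1))

lemma S1 (m k j : ℤ) : c1q m * wq (k-1) (j-1) = nuq k j * A1q m j := by
  have d1 : (2*(j:ℚ)-1) ≠ 0 := by exact_mod_cast q_ne (2*j-1) (by omega)
  have d2 : (2*(j:ℚ)+1) ≠ 0 := by exact_mod_cast q_ne (2*j+1) (by omega)
  rw [wq, nuq, A1q, c1q, show k - 1 + (j - 1) = k + j - 2 by ring, neg_one_zpow_sub_two]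
  push_cast
  rw [show 2*((j:ℚ)-1)+1 = 2*(j:ℚ)-1 by ring]
  field_simp
  ring

lemma S2 (m k j : ℤ) (hk : 1 ≤ k) :
    c2q m k * wq (k-1) (j-1) + c3q m k * wq k (j-1)
      - nuq k (j-1) * A3q m (j-1) - nuq k j * A2q m j = 0 := by
  have d1 : (2*(j:ℚ)-1) ≠ 0 := by exact_mod_cast q_ne (2*j-1) (by omega)
  have d2 : (2*(j:ℚ)+1) ≠ 0 := by exact_mod_cast q_ne (2*j+1) (by omega)
  have d3 : (2*(j:ℚ)-3) ≠ 0 := by exact_mod_cast q_ne (2*j-3) (by omega)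
  have hkq : (k:ℚ) ≠ 0 := by exact_mod_cast q_ne k (by omega)
  rw [wq, wq, nuq, nuq, A3q, A2q, c2q, c3q, Bratio k hk,
      show k - 1 + (j - 1) = k + j - 2 by ring, neg_one_zpow_sub_two,
      show k + (j - 1) = k + j - 1 by ring, neg_one_zpow_sub_one]
  push_cast
  rw [show 2*((j:ℚ)-1)+1 = 2*(j:ℚ)-1 by ring, show 2*((j:ℚ)-1)-1 = 2*(j:ℚ)-3 by ring]
  field_simp
  ring

lemma S5 (m k : ℤ) (hk : 1 ≤ k) :
    c3q m k * wq k (k-1) - nuq k (k-1) * A3q m (k-1) = 0 := by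
  have d1 : (2*(k:ℚ)-1) ≠ 0 := by exact_mod_cast q_ne (2*k-1) (by omega)
  have d3 : (2*(k:ℚ)-3) ≠ 0 := by exact_mod_cast q_ne (2*k-3) (by omega)
  have hkq : (k:ℚ) ≠ 0 := by exact_mod_cast q_ne k (by omega)
  rw [wq, nuq, A3q, c3q, Bratio k hk,
      show k + (k - 1) = 2*k - 1 by ring, neg_one_zpow_two_mul_sub_one]
  push_cast
  rw [show 2*((k:ℚ)-1)+1 = 2*(k:ℚ)-1 by ring, show 2*((k:ℚ)-1)-1 = 2*(k:ℚ)-3 by ring]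
  field_simp
  rw [mul_div_cancel_left₀ _ (by rw [mul_comm]; exact d3 : ((k:ℚ) * 2 - 3) ≠ 0)]
  ring

lemma S4 (m k : ℤ) (hk : 1 ≤ k) :
    c3q m k * wq k m - nuq k m * A3q m m + c2q m k * wq (k-1) m = 0 := by
  have d1 : (2*(m:ℚ)-1) ≠ 0 := by exact_mod_cast q_ne (2*m-1) (by omega)
  have d2 : (2*(m:ℚ)+1) ≠ 0 := by exact_mod_cast q_ne (2*m+1) (by omega)
  have hkq : (k:ℚ) ≠ 0 := by exact_mod_cast q_ne k (by omega)
  rw [wq, wq, nuq, A3q, c3q, c2q, Bratio k hk,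
      show k - 1 + m = k + m - 1 by ring, neg_one_zpow_sub_one]
  push_cast
  field_simp
  ring

theorem rel2_eq_zero (m k : ℤ) : rel2 m k = 0 := by
  have hempty : ∀ M κ : ℤ, M < κ → dd M κ = 0 := by
    intro M κ h
    rw [dd]; split
    · rfl
    · refine Finset.sum_eq_zero fun i _ => ?_
      rw [Finset.Icc_eq_empty (by omega)]
      rfl
  rcases lt_or_ge m 0 with hm | hm
  · rw [rel2, dd, if_pos (by omega : m - 1 < 0), dd, if_pos hm, dd, if_pos hm]
    ring
  rcases le_or_gt k 0 with hk | hk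
  · -- k ≤ 0
    have hz : ∀ M κ : ℤ, κ < 0 → dd M κ = 0 := by
      intro M κ hκ
      rw [dd]; split
      · rfl
      · refine Finset.sum_eq_zero fun i _ => Finset.sum_eq_zero fun j _ => ?_
        rw [binC_neg (2*κ) κ hκ]
        ring
    rcases lt_or_eq_of_le hk with hk0 | hk0
    · rw [rel2, hz _ _ (by omega), hz _ _ (by omega), hz _ _ hk0]; ring
    · subst hk0
      rw [rel2, hz _ _ (by omega), hz _ _ (by omega)]
      push_cast
      ring
  rcases le_or_gt k m with hkm | hmk
  · -- main case 1 ≤ k ≤ m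
    have hm1 : 1 ≤ m := by omega
    have h3 : dd m k = ∑ j ∈ Finset.Icc k m, wq k j * Sz m j := dd_eq m k hm
    have h1 : dd (m-1) (k-1) = ∑ j ∈ Finset.Icc k m, wq (k-1) (j-1) * Sz (m-1) (j-1) := by
      rw [dd_eq (m-1) (k-1) (by omega)]
      rw [show Finset.Icc k m = Finset.map (addRightEmbedding (1:ℤ)) (Finset.Icc (k-1) (m-1)) by
            rw [Finset.map_add_right_Icc]; congr 1 <;> ring,
          Finset.sum_map]
      refine Finset.sum_congr rfl fun j _ => ?_
      simp only [addRightEmbedding_apply]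
      rw [show j + 1 - 1 = j by ring]
    have h2 : dd m (k-1) = (∑ j ∈ Finset.Icc k m, wq (k-1) (j-1) * Sz m (j-1))
        + wq (k-1) m * Sz m m := by
      rw [dd_eq m (k-1) (by omega)]
      have hre : ∑ j ∈ Finset.Icc (k-1) m, wq (k-1) j * Sz m j
          = ∑ j ∈ Finset.Icc k (m+1), wq (k-1) (j-1) * Sz m (j-1) := by
        rw [show Finset.Icc k (m+1) = Finset.map (addRightEmbedding (1:ℤ)) (Finset.Icc (k-1) m) by
              rw [Finset.map_add_right_Icc]; congr 1 <;> ring,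
            Finset.sum_map]
        refine Finset.sum_congr rfl fun j _ => ?_
        simp only [addRightEmbedding_apply]
        rw [show j + 1 - 1 = j by ring]
      rw [hre, show Finset.Icc k (m+1) = insert (m+1) (Finset.Icc k m) by ext x; simp; omega,
          Finset.sum_insert (by simp), show m + 1 - 1 = m by ring]
      ring
    have hrel : rel2 m k = c1q m * dd (m-1) (k-1) + c2q m k * dd m (k-1) + c3q m k * dd m k := by
      rw [rel2, c1q, c2q, c3q]; push_cast; ring
    rw [hrel, h1, h2, h3]
    have hper : ∀ j ∈ Finset.Icc k m,
        c1q m * (wq (k-1) (j-1) * Sz (m-1) (j-1)) + c2q m k * (wq (k-1) (j-1) * Sz m (j-1))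
          + c3q m k * (wq k j * Sz m j)
        = nuq k j * (A1q m j * Sz (m-1) (j-1) + A2q m j * Sz m (j-1) + A3q m j * Sz m j)
          + ((c3q m k * wq k j - nuq k j * A3q m j) * Sz m j
             - (c3q m k * wq k (j-1) - nuq k (j-1) * A3q m (j-1)) * Sz m (j-1)) := by
      intro j hj
      have s1 := S1 m k j
      have s2 := S2 m k j (by omega)
      linear_combination Sz (m-1) (j-1) * s1 + Sz m (j-1) * s2
    have hsum0 : ∑ j ∈ Finset.Icc k m,
        nuq k j * (A1q m j * Sz (m-1) (j-1) + A2q m j * Sz m (j-1) + A3q m j * Sz m j) = 0 :=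
      Finset.sum_eq_zero fun j hj => by
        have hj' : k ≤ j ∧ j ≤ m := by simpa using hj
        rw [keyS m j hm1 (by omega) hj'.2, mul_zero]
    have htel : ∑ j ∈ Finset.Icc k m,
        ((c3q m k * wq k j - nuq k j * A3q m j) * Sz m j
          - (c3q m k * wq k (j-1) - nuq k (j-1) * A3q m (j-1)) * Sz m (j-1))
        = (c3q m k * wq k m - nuq k m * A3q m m) * Sz m m
          - (c3q m k * wq k (k-1) - nuq k (k-1) * A3q m (k-1)) * Sz m (k-1) :=
      tele_Icc (fun j => (c3q m k * wq k j - nuq k j * A3q m j) * Sz m j) k m (by omega)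
    have expand : c1q m * (∑ j ∈ Finset.Icc k m, wq (k-1) (j-1) * Sz (m-1) (j-1))
        + c2q m k * ((∑ j ∈ Finset.Icc k m, wq (k-1) (j-1) * Sz m (j-1)) + wq (k-1) m * Sz m m)
        + c3q m k * (∑ j ∈ Finset.Icc k m, wq k j * Sz m j)
        = (∑ j ∈ Finset.Icc k m, (c1q m * (wq (k-1) (j-1) * Sz (m-1) (j-1))
            + c2q m k * (wq (k-1) (j-1) * Sz m (j-1)) + c3q m k * (wq k j * Sz m j)))
          + c2q m k * (wq (k-1) m * Sz m m) := by
      rw [Finset.sum_add_distrib, Finset.sum_add_distrib,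
          ← Finset.mul_sum, ← Finset.mul_sum, ← Finset.mul_sum]
      ring
    rw [expand, Finset.sum_congr rfl hper, Finset.sum_add_distrib, hsum0, htel]
    have s4 := S4 m k (by omega)
    have s5 := S5 m k (by omega)
    linear_combination Sz m m * s4 - Sz m (k-1) * s5
  · -- k > m
    rcases eq_or_lt_of_le (by omega : m + 1 ≤ k) with he | hlt
    · rw [rel2, hempty _ _ (by omega : m - 1 < k - 1), hempty _ _ (by omega : m < k)]
      have hc : (m:ℚ) = (k:ℚ) - 1 := by exact_mod_cast (by omega : m = k - 1)
      rw [hc]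
      ring
    · rw [rel2, hempty _ _ (by omega), hempty _ _ (by omega), hempty _ _ (by omega)]
      ring
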